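/- If B = Σ_n |b_n⟩⟨b_n| where each b_n ∈ ℂ^d has at most k nonzero coordinates, then for the all-ones vector e ∈ ℝ^d one has ⟨e| M_{k-1}(B) |e⟩ = Σ_i (k−1)B_{ii} − Σ_{i≠j}|B_{ij}| ≥ 0. -/

import Mathlib

open Matrix Finset
open scoped ComplexOrder

private lemma Bentry' {d : ℕ} {N : ℕ} (b : Fin N → Fin d → ℂ) (i j : Fin d) :
    (∑ n, vecMulVec (b n) (star (b n))) i j = ∑ n, b n i * (starRingEnd ℂ) (b n j) := by
  simp [vecMulVec, Matrix.sum_apply]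

/-- If `B = Σ_n |b_n⟩⟨b_n|` with each `b_n` supported on at most `k` coordinates,
then for the all-ones vector `e` one has
`⟨e| M_{k-1}(B) |e⟩ = Σ_i (k−1) B_{ii} − Σ_{i≠j} |B_{ij}| ≥ 0`. -/
theorem all_ones_quadratic_form_M_k_sub_one_nonneg {d k : ℕ}
    (B : Matrix (Fin d) (Fin d) ℂ)
    (N : ℕ) (b : Fin N → Fin d → ℂ)
    (hsupp : ∀ n, (univ.filter (fun i => b n i ≠ 0)).card ≤ k)
    (hdec : B = ∑ n, vecMulVec (b n) (star (b n))) :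
    (∑ i, ∑ j, (Matrix.of fun i j =>
        if i = j then ((k : ℝ) - 1) * ‖B i i‖ else -‖B i j‖ :
        Matrix (Fin d) (Fin d) ℝ) i j)
      = (∑ i, ((k : ℝ) - 1) * (B i i).re)
        - ∑ i, ∑ j ∈ univ.filter (· ≠ i), ‖B i j‖ ∧
    0 ≤ (∑ i, ((k : ℝ) - 1) * (B i i).re)
        - ∑ i, ∑ j ∈ univ.filter (· ≠ i), ‖B i j‖ := by
  have hB : ∀ i j, B i j = ∑ n, b n i * (starRingEnd ℂ) (b n j) := by
    intro i j; rw [hdec]; exact Bentry' b i j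
  have hfnn : ∀ (n : Fin N) (i : Fin d), (0:ℝ) ≤ ‖b n i‖ :=
    fun n i => norm_nonneg _
  set f : Fin N → Fin d → ℝ := fun n i => ‖b n i‖ with hf
  have hre : ∀ i, (B i i).re = ∑ n, f n i ^ 2 := by
    intro i
    rw [hB, Complex.re_sum]
    refine Finset.sum_congr rfl fun n _ => ?_
    rw [Complex.mul_conj, Complex.ofReal_re, Complex.normSq_eq_norm_sq]
  have hiinn : ∀ i, 0 ≤ (B i i).re := by
    intro i; rw [hre]
    exact Finset.sum_nonneg fun n _ => sq_nonneg _
  -- diagonal entries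
  have hdiag : ∀ i, ‖B i i‖ = (B i i).re := by
    intro i
    have h1 : B i i = (((B i i).re : ℝ) : ℂ) := by
      rw [hB]
      rw [show (∑ n, b n i * (starRingEnd ℂ) (b n i))
          = ((∑ n, Complex.normSq (b n i) : ℝ) : ℂ) by
        push_cast
        exact Finset.sum_congr rfl fun n _ => Complex.mul_conj _]
      rw [Complex.ofReal_re]
    rw [h1, Complex.norm_real, Real.norm_eq_abs, Complex.ofReal_re]
    exact abs_of_nonneg (hiinn i)
  have herase : ∀ i : Fin d, univ.filter (· ≠ i) = (univ : Finset (Fin d)).erase i := by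
    intro i; ext j; simp [Finset.mem_erase]
  -- the equality part
  have heq : (∑ i, ∑ j, (Matrix.of fun i j =>
        if i = j then ((k : ℝ) - 1) * ‖B i i‖ else -‖B i j‖ :
        Matrix (Fin d) (Fin d) ℝ) i j)
      = (∑ i, ((k : ℝ) - 1) * (B i i).re)
        - ∑ i, ∑ j ∈ univ.filter (· ≠ i), ‖B i j‖ := by
    rw [← Finset.sum_sub_distrib]
    refine Finset.sum_congr rfl fun i _ => ?_
    simp only [Matrix.of_apply]
    rw [← Finset.add_sum_erase univ _ (Finset.mem_univ i), if_pos rfl, herase i]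
    have h3 : ∑ j ∈ univ.erase i,
        (if i = j then ((k : ℝ) - 1) * ‖B i i‖ else -‖B i j‖)
        = ∑ j ∈ univ.erase i, -‖B i j‖ :=
      Finset.sum_congr rfl fun j hj =>
        if_neg (fun h => (Finset.mem_erase.mp hj).1 h.symm)
    rw [h3, Finset.sum_neg_distrib, hdiag i]
    ring
  refine ⟨heq, ?_⟩
  -- nonnegativity
  have habs : ∀ i j, ‖B i j‖ ≤ ∑ n, f n i * f n j := by
    intro i j
    rw [hB]
    refine le_trans (norm_sum_le _ _) ?_
    refine le_of_eq (Finset.sum_congr rfl fun n _ => ?_)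
    simp [hf, norm_mul, Complex.norm_conj]
  have key : ∀ n, ∑ i, ∑ j ∈ univ.filter (· ≠ i), f n i * f n j
      ≤ ((k : ℝ) - 1) * ∑ i, f n i ^ 2 := by
    intro n
    set s := univ.filter (fun i => b n i ≠ 0) with hs
    have hsum_eq : ∑ i, f n i = ∑ i ∈ s, f n i := by
      rw [Finset.sum_filter_of_ne]
      intro i _ hfi h0
      exact hfi (by simp [hf, h0])
    have hsq_eq : ∑ i, f n i ^ 2 = ∑ i ∈ s, f n i ^ 2 := by
      rw [Finset.sum_filter_of_ne]
      intro i _ hfi h0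
      exact hfi (by simp [hf, h0])
    have hCS : (∑ i, f n i) ^ 2 ≤ (k : ℝ) * ∑ i, f n i ^ 2 := by
      rw [hsum_eq, hsq_eq]
      calc (∑ i ∈ s, f n i) ^ 2 ≤ (s.card : ℝ) * ∑ i ∈ s, f n i ^ 2 :=
            sq_sum_le_card_mul_sum_sq
        _ ≤ (k : ℝ) * ∑ i ∈ s, f n i ^ 2 := by
            apply mul_le_mul_of_nonneg_right _ (Finset.sum_nonneg fun i _ => sq_nonneg _)
            exact_mod_cast hsupp n
    have hsplit : ∑ i, ∑ j ∈ univ.filter (· ≠ i), f n i * f n j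
        = (∑ i, f n i) ^ 2 - ∑ i, f n i ^ 2 := by
      have hstep : ∀ i : Fin d, ∑ j ∈ univ.filter (· ≠ i), f n i * f n j
          = (∑ j, f n i * f n j) - f n i ^ 2 := by
        intro i
        rw [herase i, ← Finset.add_sum_erase univ (fun j => f n i * f n j) (Finset.mem_univ i)]
        ring
      rw [Finset.sum_congr rfl fun i _ => hstep i, Finset.sum_sub_distrib]
      congr 1
      rw [sq, Finset.sum_mul]
      exact Finset.sum_congr rfl fun i _ => by rw [Finset.mul_sum]
    rw [hsplit]
    nlinarith [Finset.sum_nonneg (fun i (_ : i ∈ (univ : Finset (Fin d))) => sq_nonneg (f n i))]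
  have h1 : ∑ i, ∑ j ∈ univ.filter (· ≠ i), ‖B i j‖
      ≤ ∑ n, ∑ i, ∑ j ∈ univ.filter (· ≠ i), f n i * f n j := by
    rw [Finset.sum_comm]
    refine Finset.sum_le_sum fun i _ => ?_
    rw [Finset.sum_comm]
    exact Finset.sum_le_sum fun j _ => habs i j
  have h2 : ∑ n, ∑ i, ∑ j ∈ univ.filter (· ≠ i), f n i * f n j
      ≤ ∑ i, ((k : ℝ) - 1) * (B i i).re := by
    calc ∑ n, ∑ i, ∑ j ∈ univ.filter (· ≠ i), f n i * f n j
        ≤ ∑ n, ((k : ℝ) - 1) * ∑ i, f n i ^ 2 := Finset.sum_le_sum fun n _ => key n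
      _ = ∑ i, ((k : ℝ) - 1) * (B i i).re := by
          simp_rw [hre, Finset.mul_sum]
          rw [Finset.sum_comm]
  linarith
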